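/- Let L be a Dirac structure in the H-twisted Courant algebroid TM ⊕ T*M and ∇^K an affine connection on M. Define φ^{KL}(a,b) = ρ_{T*}([a,b]) + ∇^K_{ρ(b)}(ρ_{T*}(a)) − ∇^K_{ρ(a)}(ρ_{T*}(b)) for sections a, b of L, where [a,b] is the restricted Dorfman bracket on L. Then φ^{KL} is C^∞(M)-bilinear and antisymmetric, defining a tensor φ^{KL} ∈ Γ(Λ²L* ⊗ T*M). -/
import Mathlib


open scoped BigOperators

noncomputable section CourantModel

variable {A : Type*} [CommRing A] [Algebra ℝ A]

abbrev Vec (A : Type*) [CommRing A] [Algebra ℝ A] := Derivation ℝ A A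

abbrev GT (A : Type*) [CommRing A] [Algebra ℝ A] := Vec A × (Vec A → A)

/-- A (smooth) one-form in the algebraic model: an `A`-linear functional on vector fields. -/
def IsOneForm (ξ : Vec A → A) : Prop :=
  (∀ X Y, ξ (X + Y) = ξ X + ξ Y) ∧ ∀ (f : A) (X : Vec A), ξ (f • X) = f * ξ X

/-- The differential of a function. -/
def dfun (f : A) : Vec A → A := fun X => X f

/-- Lie derivative of a one-form. -/
def lieD (X : Vec A) (ν : Vec A → A) : Vec A → A := fun Y => X (ν Y) - ν ⁅X, Y⁆

/-- Exterior derivative of a one-form (as a two-form). -/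
def dext (ξ : Vec A → A) : Vec A → Vec A → A :=
  fun Y Z => Y (ξ Z) - Z (ξ Y) - ξ ⁅Y, Z⁆

/-- A three-form: alternating and `A`-multilinear. -/
def IsThreeForm (H : Vec A → Vec A → Vec A → A) : Prop :=
  (∀ X Y Z, H X Y Z = - H Y X Z) ∧ (∀ X Y Z, H X Y Z = - H X Z Y) ∧
  (∀ (f : A) (X Y Z : Vec A), H (f • X) Y Z = f * H X Y Z) ∧
  (∀ X X' Y Z, H (X + X') Y Z = H X Y Z + H X' Y Z)

/-- The canonical symmetric pairing `⟨X+ξ, Y+ν⟩ = ν(X) + ξ(Y)`. -/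
def pair (a b : GT A) : A := b.2 a.1 + a.2 b.1

/-- The anchor `ρ(X+ξ) = X`. -/
def anchor (a : GT A) : Vec A := a.1

/-- The `H`-twisted Dorfman bracket
`[[X+ξ, Y+ν]] = [X,Y] + L_X ν − ι_Y dξ + ι_Y ι_X H`. -/
def dorf (H : Vec A → Vec A → Vec A → A) (a b : GT A) : GT A :=
  (⁅a.1, b.1⁆, fun Z => lieD a.1 b.2 Z - dext a.2 b.1 Z + H a.1 b.1 Z)

/-- The skew-symmetrised (Courant) bracket `[[a,b]]_sk = ½([[a,b]] − [[b,a]])`. -/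
def skewBr (H : Vec A → Vec A → Vec A → A) (a b : GT A) : GT A :=
  (1/2 : ℝ) • (dorf H a b - dorf H b a)

end CourantModel

noncomputable section

variable {A : Type*} [CommRing A] [Algebra ℝ A]

/-- The connection on `T*M` induced by an affine connection `K` on `M`:
`(∇^K_X ξ)(Z) = X(ξ Z) − ξ(∇^K_X Z)`. -/
def coK (K : Vec A → Vec A → Vec A) (X : Vec A) (ξ : Vec A → A) : Vec A → A :=
  fun Z => X (ξ Z) - ξ (K X Z)

/-- `φ^{KL}(a,b) = ρ_{T*}([[a,b]]) + ∇^K_{ρ(b)}(ρ_{T*}(a)) − ∇^K_{ρ(a)}(ρ_{T*}(b))`. -/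
def phiKL (H : Vec A → Vec A → Vec A → A) (K : Vec A → Vec A → Vec A)
    (a b : GT A) : Vec A → A :=
  fun Z => (dorf H a b).2 Z + coK K b.1 a.2 Z - coK K a.1 b.2 Z


section Aux
variable {A : Type*} [CommRing A] [Algebra ℝ A]

lemma vec_smul_apply (f : A) (X : Vec A) (g : A) : (f • X) g = f * X g := rfl

lemma smul_lie_vec (f : A) (X Z : Vec A) :
    ⁅f • X, Z⁆ = f • ⁅X, Z⁆ - (Z f) • X := by
  ext g
  simp only [Derivation.commutator_apply, Derivation.sub_apply, Derivation.smul_apply,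
    smul_eq_mul, Derivation.leibniz, smul_eq_mul]
  ring

lemma oneform_smul {ξ : Vec A → A} (h : IsOneForm ξ) (f : A) (X : Vec A) :
    ξ (f • X) = f * ξ X := h.2 f X

lemma oneform_sub {ξ : Vec A → A} (h : IsOneForm ξ) (X Y : Vec A) :
    ξ (X - Y) = ξ X - ξ Y := by
  have hneg : ξ (-Y) = - ξ Y := by
    have := h.2 (-1 : A) Y
    simpa [neg_smul, one_smul] using this
  rw [sub_eq_add_neg, h.1, hneg, sub_eq_add_neg]

lemma phiKL_apply (H : Vec A → Vec A → Vec A → A) (K : Vec A → Vec A → Vec A)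
    (a b : GT A) (Z : Vec A) :
    phiKL H K a b Z =
      Z (a.2 b.1) + a.2 ⁅b.1, Z⁆ - a.2 (K b.1 Z) + b.2 (K a.1 Z)
        - b.2 ⁅a.1, Z⁆ + H a.1 b.1 Z := by
  simp only [phiKL, dorf, coK, lieD, dext]
  ring

end Aux

/-- Let `L` be a Dirac structure in the `H`-twisted Courant algebroid
`TM ⊕ T*M` and `∇^K` an affine connection on `M`.  Then
`φ^{KL}(a,b) = ρ_{T*}([a,b]) + ∇^K_{ρ(b)}(ρ_{T*}(a)) − ∇^K_{ρ(a)}(ρ_{T*}(b))` is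
antisymmetric and `C^∞(M)`-bilinear on sections of `L`, defining a tensor
`φ^{KL} ∈ Γ(Λ²L* ⊗ T*M)`. -/
theorem phiKL_is_tensorial
    (H : Vec A → Vec A → Vec A → A) (hH : IsThreeForm H)
    (L : Submodule A (GT A))
    (hiso : ∀ a ∈ L, ∀ b ∈ L, pair a b = 0)
    (hform : ∀ a ∈ L, IsOneForm a.2)
    (hclosed : ∀ a ∈ L, ∀ b ∈ L, dorf H a b ∈ L)
    (K : Vec A → Vec A → Vec A)
    (hK1 : ∀ X Y Z : Vec A, K (X + Y) Z = K X Z + K Y Z)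
    (hK2 : ∀ X Y Z : Vec A, K X (Y + Z) = K X Y + K X Z)
    (hKf1 : ∀ (f : A) (X Y : Vec A), K (f • X) Y = f • K X Y)
    (hKf2 : ∀ (X : Vec A) (f : A) (Y : Vec A), K X (f • Y) = f • K X Y + (X f) • Y) :
    ∀ a ∈ L, ∀ b ∈ L,
      (phiKL H K a b = fun Z => - phiKL H K b a Z) ∧
      (∀ f : A,
        phiKL H K (f • a) b = (fun Z => f * phiKL H K a b Z) ∧
        phiKL H K a (f • b) = (fun Z => f * phiKL H K a b Z)) := by
  intro a ha b hb
  obtain ⟨ha2add, ha2smul⟩ := hform a ha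
  obtain ⟨hb2add, hb2smul⟩ := hform b hb
  have hp : b.2 a.1 + a.2 b.1 = 0 := hiso a ha b hb
  refine ⟨?_, ?_⟩
  · funext Z
    rw [phiKL_apply, phiKL_apply]
    have hZ : Z (b.2 a.1) + Z (a.2 b.1) = 0 := by
      rw [← map_add, hp, map_zero]
    have hA : H b.1 a.1 Z = - H a.1 b.1 Z := hH.1 b.1 a.1 Z
    linear_combination hZ + hA
  · intro f
    constructor
    · funext Z
      rw [phiKL_apply, phiKL_apply]
      have h1 : (f • a).1 = f • a.1 := rfl
      have h2 : ∀ X : Vec A, (f • a).2 X = f * a.2 X := fun X => rfl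
      rw [h1, h2, h2, h2, hKf1, smul_lie_vec,
        oneform_sub ⟨hb2add, hb2smul⟩, hb2smul, hb2smul, hb2smul,
        Derivation.leibniz, hH.2.2.1, smul_eq_mul, smul_eq_mul]
      linear_combination (Z f) * hp
    · funext Z
      rw [phiKL_apply, phiKL_apply]
      have h1 : (f • b).1 = f • b.1 := rfl
      have h2 : ∀ X : Vec A, (f • b).2 X = f * b.2 X := fun X => rfl
      have hH2 : H a.1 (f • b.1) Z = f * H a.1 b.1 Z := by
        rw [hH.1, hH.2.2.1, hH.1 b.1 a.1 Z]; ring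
      rw [h1, h2, h2, hKf1, smul_lie_vec,
        oneform_sub ⟨ha2add, ha2smul⟩, ha2smul, ha2smul, ha2smul, ha2smul,
        Derivation.leibniz, hH2, smul_eq_mul, smul_eq_mul]
      ring


end
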